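/- For i ≥ 1 and 1 ≤ r ≤ 2i+1, define v^r ∈ 𝔹^{2i+1} by: v^r_c = ⊥ if c = r; v^r_c = tt if c ≠ r and (c − r) mod (2i+1) is odd; v^r_c = ff if c ≠ r and (c − r) mod (2i+1) is even. Define the bivalued Gustave function bG_i : 𝔹^{2i+1} → 𝔹 by bG_i(x) = ff if v^1 ≤ x, bG_i(x) = tt if v^r ≤ x for some 2 ≤ r ≤ 2i+1, and bG_i(x) = ⊥ otherwise (this is well-defined since the v^r are pairwise incompatible). Then bG_i is monotone and cc(bG_i) = bcc(bG_i) = 2i+1 (i.e. bG_i has presequentiality level (2i, 2i)). -/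
import Mathlib


/-- The flat boolean domain: `⊥`, `tt`, `ff`. -/
abbrev Bb : Type := WithBot Bool

/-- The flat (domain) order on `Bb`: `⊥` below everything, `tt` and `ff` incomparable. -/
def bLE (a b : Bb) : Prop := a = ⊥ ∨ a = b

/-- Pointwise flat order on tuples. -/
def tupLE {k : ℕ} (x y : Fin k → Bb) : Prop := ∀ i, bLE (x i) (y i)

/-- Strict pointwise flat order on tuples. -/
def tupLT {k : ℕ} (x y : Fin k → Bb) : Prop := tupLE x y ∧ x ≠ y

/-- A first-order boolean function is monotone for the flat order. -/
def FlatMono {k : ℕ} (f : (Fin k → Bb) → Bb) : Prop :=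
  ∀ x y, tupLE x y → bLE (f x) (f y)

/-- The presequentiality relation `P^n_{A,B}` (indices `0,…,n-1`). -/
def Preseq (n : ℕ) (A B : Finset ℕ) : Set (Fin n → Bb) :=
  {d | (∃ i : Fin n, (i : ℕ) ∈ A ∧ d i = ⊥) ∨
       (∀ i j : Fin n, (i : ℕ) ∈ B → (j : ℕ) ∈ B → d i = d j)}

/-- `P^n_{m,m'}`: the presequentiality relation on initial segments. -/
def PreseqSeg (n m m' : ℕ) : Set (Fin n → Bb) :=
  Preseq n (Finset.range m) (Finset.range m')

/-- `f` (arity `k`) is invariant under an `n`-ary relation `R`. -/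
def Invariant {k n : ℕ} (f : (Fin k → Bb) → Bb) (R : Set (Fin n → Bb)) : Prop :=
  ∀ x : Fin k → Fin n → Bb, (∀ m, x m ∈ R) →
    (fun i => f (fun m => x m i)) ∈ R

/-- `π₁(tr f)`: the set of minimal points where `f` is defined. -/
def traceDom {k : ℕ} (f : (Fin k → Bb) → Bb) : Set (Fin k → Bb) :=
  {v | f v ≠ ⊥ ∧ ∀ v', tupLT v' v → f v' = ⊥}

/-- Linear coherence of a set of tuples. -/
def LinCoherent {k : ℕ} (S : Set (Fin k → Bb)) : Prop :=
  ∀ j : Fin k, (∀ v ∈ S, v j ≠ ⊥) → ∀ v ∈ S, ∀ w ∈ S, v j = w j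

/-- The coefficient of coherence `cc(f) ∈ ℕ∞`. -/
noncomputable def cc {k : ℕ} (f : (Fin k → Bb) → Bb) : ℕ∞ :=
  sInf {c : ℕ∞ | ∃ S : Finset (Fin k → Bb),
    ↑S ⊆ traceDom f ∧ 2 ≤ S.card ∧ LinCoherent (↑S : Set (Fin k → Bb)) ∧ c = (S.card : ℕ∞)}

/-- The bivalued coefficient of coherence `bcc(f) ∈ ℕ∞`. -/
noncomputable def bcc {k : ℕ} (f : (Fin k → Bb) → Bb) : ℕ∞ :=
  sInf {c : ℕ∞ | ∃ S : Finset (Fin k → Bb),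
    ↑S ⊆ traceDom f ∧ 3 ≤ S.card ∧ LinCoherent (↑S : Set (Fin k → Bb)) ∧
    (∃ v ∈ S, f v = ((true : Bool) : Bb)) ∧ (∃ v ∈ S, f v = ((false : Bool) : Bb)) ∧
    c = (S.card : ℕ∞)}

/-- M-sequentiality, by induction on the arity. -/
def MSeq : ∀ {k : ℕ}, ((Fin k → Bb) → Bb) → Prop
  | 0, f => ∃ b, ∀ x, f x = b
  | (k+1), f => (∃ b, ∀ x, f x = b) ∨
      ∃ i : Fin (k+1), (∀ x, x i = ⊥ → f x = ⊥) ∧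
        ∀ c : Bool, MSeq (fun x : Fin k → Bb => f (i.insertNth (c : Bb) x))

/-- The `r`-th trace element of the (bivalued) Gustave function of arity `2i+1`. -/
def gv (i : ℕ) (r : Fin (2 * i + 1)) : Fin (2 * i + 1) → Bb := fun c =>
  if c = r then ⊥
  else if (((c : ℕ) + (2 * i + 1) - (r : ℕ)) % (2 * i + 1)) % 2 = 1
  then ((true : Bool) : Bb)
  else ((false : Bool) : Bb)

open Classical in
/-- The bivalued Gustave function `bG_i` of arity `2i+1`: `ff` above `v^0`, `tt`
above any other `v^r`, `⊥` otherwise. -/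
noncomputable def bgust (i : ℕ) : (Fin (2 * i + 1) → Bb) → Bb := fun x =>
  if tupLE (gv i 0) x then ((false : Bool) : Bb)
  else if ∃ r, r ≠ 0 ∧ tupLE (gv i r) x then ((true : Bool) : Bb)
  else ⊥

def fdel (n r c : ℕ) : ℕ := (c + n - r) % n

lemma fdel_eq {n r c : ℕ} (hr : r < n) (hc : c < n) :
    fdel n r c = if r ≤ c then c - r else c + n - r := by
  unfold fdel
  split_ifs with h
  · have h2 : c + n - r = (c - r) + n := by omega
    rw [h2, Nat.add_mod_right, Nat.mod_eq_of_lt (by omega)]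
  · exact Nat.mod_eq_of_lt (by omega)

lemma fdel_add {n r s : ℕ} (hr : r < n) (hs : s < n) (hrs : r ≠ s) :
    fdel n r s + fdel n s r = n := by
  rw [fdel_eq hr hs, fdel_eq hs hr]; split_ifs <;> omega

lemma adj_nat {n p t : ℕ} (hp : p < n) (ht : t < n) (h1 : t ≠ p) (h2 : t ≠ (p + 1) % n) :
    fdel n p t % 2 ≠ fdel n ((p + 1) % n) t % 2 := by
  rcases Nat.lt_or_ge (p + 1) n with h | h
  · have hq : (p + 1) % n = p + 1 := Nat.mod_eq_of_lt h
    rw [hq] at h2 ⊢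
    rw [fdel_eq hp ht, fdel_eq h ht]
    split_ifs <;> omega
  · have hpn : p + 1 = n := by omega
    have hq : (p + 1) % n = 0 := by rw [hpn, Nat.mod_self]
    rw [hq] at h2 ⊢
    rw [fdel_eq hp ht, fdel_eq (by omega : 0 < n) ht]
    split_ifs <;> omega

lemma first_nat_aux {n r s : ℕ} (hn2 : n % 2 = 1) (h3 : 3 ≤ n) (hr : r < n) (hs : s < n)
    (hodd : fdel n r s % 2 = 1) :
    ∃ c < n, c ≠ r ∧ c ≠ s ∧ fdel n r c % 2 ≠ fdel n s c % 2 ∧ (c + 1) % n = r := by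
  rw [fdel_eq hr hs] at hodd
  by_cases h0 : r = 0
  · have hc : n - 1 < n := by omega
    refine ⟨n - 1, hc, by omega, ?_, ?_, by rw [show n - 1 + 1 = n by omega, Nat.mod_self, h0]⟩
    · intro h; split_ifs at hodd <;> omega
    · rw [fdel_eq hr hc, fdel_eq hs hc]
      split_ifs at hodd ⊢ <;> omega
  · have hc : r - 1 < n := by omega
    refine ⟨r - 1, hc, by omega, ?_, ?_,
      by rw [show r - 1 + 1 = r by omega]; exact Nat.mod_eq_of_lt hr⟩
    · intro h; split_ifs at hodd <;> omega
    · rw [fdel_eq hr hc, fdel_eq hs hc]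
      split_ifs at hodd ⊢ <;> omega

lemma first_nat {n r s : ℕ} (hn2 : n % 2 = 1) (h3 : 3 ≤ n) (hr : r < n) (hs : s < n)
    (hrs : r ≠ s) :
    ∃ c < n, c ≠ r ∧ c ≠ s ∧ fdel n r c % 2 ≠ fdel n s c % 2 ∧
      ((c + 1) % n = r ∨ (c + 1) % n = s) := by
  by_cases hodd : fdel n r s % 2 = 1
  · obtain ⟨c, h1, h2, h3', h4, h5⟩ := first_nat_aux hn2 h3 hr hs hodd
    exact ⟨c, h1, h2, h3', h4, Or.inl h5⟩
  · have hsum := fdel_add hr hs hrs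
    have hodd' : fdel n s r % 2 = 1 := by omega
    obtain ⟨c, h1, h2, h3', h4, h5⟩ := first_nat_aux hn2 h3 hs hr hodd'
    exact ⟨c, h1, h3', h2, h4.symm, Or.inr h5⟩

-- order lemmas
lemma bLE_trans {a b c : Bb} (h1 : bLE a b) (h2 : bLE b c) : bLE a c := by
  rcases h1 with h | h
  · exact Or.inl h
  · subst h; exact h2

lemma bLE_antisymm {a b : Bb} (h1 : bLE a b) (h2 : bLE b a) : a = b := by
  rcases h1 with h | h
  · rcases h2 with h' | h'
    · rw [h, h']
    · exact h'.symm
  · exact h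

lemma tupLE_refl {k : ℕ} (x : Fin k → Bb) : tupLE x x := fun _ => Or.inr rfl

lemma tupLE_trans {k : ℕ} {x y z : Fin k → Bb} (h1 : tupLE x y) (h2 : tupLE y z) :
    tupLE x z := fun j => bLE_trans (h1 j) (h2 j)

lemma tupLE_antisymm {k : ℕ} {x y : Fin k → Bb} (h1 : tupLE x y) (h2 : tupLE y x) :
    x = y := funext fun j => bLE_antisymm (h1 j) (h2 j)

-- gv lemmas
lemma gv_self (i : ℕ) (r : Fin (2 * i + 1)) : gv i r r = ⊥ := by simp [gv]

lemma gv_app (i : ℕ) {r c : Fin (2 * i + 1)} (h : c ≠ r) :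
    gv i r c = ((decide (fdel (2 * i + 1) (r : ℕ) (c : ℕ) % 2 = 1) : Bool) : Bb) := by
  unfold gv fdel
  rw [if_neg h]
  split_ifs with hp <;> simp [hp]

lemma gv_ne_bot (i : ℕ) {r c : Fin (2 * i + 1)} (h : c ≠ r) : gv i r c ≠ ⊥ := by
  rw [gv_app i h]; exact WithBot.coe_ne_bot

lemma gv_inj (i : ℕ) : Function.Injective (gv i) := by
  intro r s h
  by_contra hne
  exact gv_ne_bot i (fun h' : r = s => hne h') (by rw [← h]; exact gv_self i r)

lemma gv_disagree (i : ℕ) {r s c : Fin (2 * i + 1)} (hr : c ≠ r) (hs : c ≠ s)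
    (hp : fdel (2 * i + 1) (r : ℕ) (c : ℕ) % 2 ≠ fdel (2 * i + 1) (s : ℕ) (c : ℕ) % 2) :
    gv i r c ≠ gv i s c := by
  rw [gv_app i hr, gv_app i hs]
  by_cases q1 : fdel (2 * i + 1) (r : ℕ) (c : ℕ) % 2 = 1 <;>
    by_cases q2 : fdel (2 * i + 1) (s : ℕ) (c : ℕ) % 2 = 1 <;>
    first
      | (exfalso; omega)
      | simp [q1, q2]

lemma val_add_one' (i : ℕ) (p : Fin (2 * i + 1)) :
    ((p + 1 : Fin (2 * i + 1)) : ℕ) = ((p : ℕ) + 1) % (2 * i + 1) := by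
  rw [Fin.add_def]
  show ((p : ℕ) + (1 : Fin (2 * i + 1)).val) % (2 * i + 1) = _
  rw [Fin.val_one']
  conv_rhs => rw [Nat.add_mod, Nat.mod_eq_of_lt p.isLt]

lemma gv_adj (i : ℕ) {p t : Fin (2 * i + 1)} (h1 : t ≠ p) (h2 : t ≠ p + 1) :
    gv i p t ≠ ⊥ ∧ gv i (p + 1) t ≠ ⊥ ∧ gv i p t ≠ gv i (p + 1) t := by
  have hv := val_add_one' i p
  refine ⟨gv_ne_bot i h1, gv_ne_bot i h2, gv_disagree i h1 h2 ?_⟩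
  rw [hv]
  exact adj_nat p.isLt t.isLt (fun h => h1 (Fin.ext h))
    (fun h => h2 (Fin.ext (by rw [hv]; exact h)))

lemma gv_first (i : ℕ) (hi : 1 ≤ i) {r s : Fin (2 * i + 1)} (h : r ≠ s) :
    ∃ c : Fin (2 * i + 1), gv i r c ≠ ⊥ ∧ gv i s c ≠ ⊥ ∧ gv i r c ≠ gv i s c ∧
      (r = c + 1 ∨ s = c + 1) := by
  obtain ⟨c, hc, h1, h2, h3, h4⟩ :=
    first_nat (n := 2 * i + 1) (by omega) (by omega) r.isLt s.isLt
      (fun hh => h (Fin.ext hh))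
  refine ⟨⟨c, hc⟩, gv_ne_bot i (fun hh => h1 (congrArg Fin.val hh)),
    gv_ne_bot i (fun hh => h2 (congrArg Fin.val hh)),
    gv_disagree i (fun hh => h1 (congrArg Fin.val hh)) (fun hh => h2 (congrArg Fin.val hh)) h3,
    ?_⟩
  rcases h4 with h4 | h4
  · exact Or.inl (Fin.ext (by rw [val_add_one' i]; exact h4.symm))
  · exact Or.inr (Fin.ext (by rw [val_add_one' i]; exact h4.symm))

lemma gv_incompat (i : ℕ) (hi : 1 ≤ i) {r s : Fin (2 * i + 1)} (h : r ≠ s)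
    {x : Fin (2 * i + 1) → Bb} (hr : tupLE (gv i r) x) (hs : tupLE (gv i s) x) : False := by
  obtain ⟨c, h1, h2, h3, -⟩ := gv_first i hi h
  rcases hr c with hb | hb
  · exact h1 hb
  rcases hs c with hb' | hb'
  · exact h2 hb'
  exact h3 (hb.trans hb'.symm)

-- bgust evaluation
lemma bgust_ff (i : ℕ) {x : Fin (2 * i + 1) → Bb} (h : tupLE (gv i 0) x) :
    bgust i x = ((false : Bool) : Bb) := by
  unfold bgust; rw [if_pos h]

lemma bgust_tt (i : ℕ) (hi : 1 ≤ i) {x : Fin (2 * i + 1) → Bb} {r : Fin (2 * i + 1)}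
    (hr : r ≠ 0) (h : tupLE (gv i r) x) : bgust i x = ((true : Bool) : Bb) := by
  unfold bgust
  rw [if_neg (fun h0 => gv_incompat i hi (Ne.symm hr) h0 h), if_pos ⟨r, hr, h⟩]

lemma bgust_bot (i : ℕ) {x : Fin (2 * i + 1) → Bb} (h0 : ¬ tupLE (gv i 0) x)
    (h1 : ¬ ∃ r, r ≠ 0 ∧ tupLE (gv i r) x) : bgust i x = ⊥ := by
  unfold bgust; rw [if_neg h0, if_neg h1]

lemma bgust_cases (i : ℕ) {x : Fin (2 * i + 1) → Bb} (h : bgust i x ≠ ⊥) :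
    ∃ r, tupLE (gv i r) x := by
  unfold bgust at h
  split_ifs at h with a b
  · exact ⟨0, a⟩
  · obtain ⟨r, -, hr⟩ := b; exact ⟨r, hr⟩
  · exact absurd rfl h

lemma bgust_gv_ne_bot (i : ℕ) (hi : 1 ≤ i) (r : Fin (2 * i + 1)) :
    bgust i (gv i r) ≠ ⊥ := by
  by_cases h : r = 0
  · rw [h, bgust_ff i (tupLE_refl _)]; exact WithBot.coe_ne_bot
  · rw [bgust_tt i hi h (tupLE_refl _)]; exact WithBot.coe_ne_bot

lemma bgust_mono (i : ℕ) (hi : 1 ≤ i) : FlatMono (bgust i) := by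
  intro x y hxy
  by_cases h0 : tupLE (gv i 0) x
  · rw [bgust_ff i h0, bgust_ff i (tupLE_trans h0 hxy)]; exact Or.inr rfl
  by_cases h1 : ∃ r, r ≠ 0 ∧ tupLE (gv i r) x
  · obtain ⟨r, hr, hle⟩ := h1
    rw [bgust_tt i hi hr hle, bgust_tt i hi hr (tupLE_trans hle hxy)]; exact Or.inr rfl
  · rw [bgust_bot i h0 h1]; exact Or.inl rfl

lemma gv_mem_trace (i : ℕ) (hi : 1 ≤ i) (r : Fin (2 * i + 1)) :
    gv i r ∈ traceDom (bgust i) := by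
  refine ⟨bgust_gv_ne_bot i hi r, ?_⟩
  rintro v' ⟨hle, hne⟩
  by_contra hb
  obtain ⟨s, hs⟩ := bgust_cases i hb
  by_cases hss : s = r
  · subst hss
    exact hne (tupLE_antisymm hle hs)
  · exact gv_incompat i hi hss (tupLE_trans hs hle) (tupLE_refl _)

lemma trace_sub (i : ℕ) (hi : 1 ≤ i) :
    traceDom (bgust i) ⊆ Set.range (gv i) := by
  rintro v ⟨hne, hmin⟩
  obtain ⟨r, hr⟩ := bgust_cases i hne
  refine ⟨r, ?_⟩
  by_contra hv
  exact bgust_gv_ne_bot i hi r (hmin _ ⟨hr, hv⟩)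

lemma lower (i : ℕ) (hi : 1 ≤ i) (S : Finset (Fin (2 * i + 1) → Bb))
    (hS : ↑S ⊆ traceDom (bgust i)) (h2 : 2 ≤ S.card)
    (hcoh : LinCoherent (↑S : Set (Fin (2 * i + 1) → Bb))) : S.card = 2 * i + 1 := by
  classical
  have hmem : ∀ v ∈ S, ∃ t, gv i t = v := fun v hv => trace_sub i hi (hS hv)
  have step : ∀ r s : Fin (2 * i + 1), gv i r ∈ S → gv i s ∈ S →
      ∀ j, gv i r j ≠ ⊥ → gv i s j ≠ ⊥ → gv i r j ≠ gv i s j → gv i j ∈ S := by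
    intro r s hr hs j hjr hjs hd
    by_contra hj
    apply hd
    refine hcoh j ?_ _ hr _ hs
    intro v hv hvb
    obtain ⟨t, ht⟩ := hmem v hv
    have htj : t = j := by
      by_contra htj
      exact gv_ne_bot i (Ne.symm htj) (by rw [ht]; exact hvb)
    exact hj (by rw [htj] at ht; rw [ht]; exact hv)
  have adjstep : ∀ p : Fin (2 * i + 1), gv i p ∈ S → gv i (p + 1) ∈ S →
      ∀ t, gv i t ∈ S := by
    intro p hp hp1 t
    by_cases h1 : t = p
    · rwa [h1]
    by_cases h2' : t = p + 1
    · rwa [h2']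
    obtain ⟨a1, a2, a3⟩ := gv_adj i h1 h2'
    exact step p (p + 1) hp hp1 t a1 a2 a3
  have hall : ∀ t, gv i t ∈ S := by
    have h1lt : 1 < S.card := by omega
    obtain ⟨v, hv, w, hw, hvw⟩ := Finset.one_lt_card.mp h1lt
    obtain ⟨r, hr⟩ := hmem v hv
    obtain ⟨s, hs⟩ := hmem w hw
    have hrs : r ≠ s := fun h => hvw (by rw [← hr, ← hs, h])
    obtain ⟨c, c1, c2, c3, c4⟩ := gv_first i hi hrs
    have hcS : gv i c ∈ S := step r s (hr ▸ hv) (hs ▸ hw) c c1 c2 c3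
    rcases c4 with h | h
    · exact adjstep c hcS (by rw [← h, hr]; exact hv)
    · exact adjstep c hcS (by rw [← h, hs]; exact hw)
  have hSeq : S = Finset.univ.image (gv i) := by
    apply Finset.Subset.antisymm
    · intro v hv
      obtain ⟨t, ht⟩ := hmem v hv
      exact Finset.mem_image.mpr ⟨t, Finset.mem_univ t, ht⟩
    · intro v hv
      obtain ⟨t, -, ht⟩ := Finset.mem_image.mp hv
      exact ht ▸ hall t
  rw [hSeq, Finset.card_image_of_injective _ (gv_inj i), Finset.card_univ, Fintype.card_fin]

/-- for `i ≥ 1`, `bG_i` is monotone and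
`cc (bG_i) = bcc (bG_i) = 2i + 1`. -/
theorem stmt_18 (i : ℕ) (hi : 1 ≤ i) :
    FlatMono (bgust i) ∧
    cc (bgust i) = ((2 * i + 1 : ℕ) : ℕ∞) ∧
    bcc (bgust i) = ((2 * i + 1 : ℕ) : ℕ∞) := by
  classical
  set T : Finset (Fin (2 * i + 1) → Bb) := Finset.univ.image (gv i) with hT
  have hmemT : ∀ t, gv i t ∈ T := fun t => Finset.mem_image.mpr ⟨t, Finset.mem_univ t, rfl⟩
  have hTsub : ↑T ⊆ traceDom (bgust i) := by
    intro v hv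
    obtain ⟨t, -, ht⟩ := Finset.mem_image.mp (Finset.mem_coe.mp hv)
    exact ht ▸ gv_mem_trace i hi t
  have hTcard : T.card = 2 * i + 1 := by
    rw [hT, Finset.card_image_of_injective _ (gv_inj i), Finset.card_univ, Fintype.card_fin]
  have hTcoh : LinCoherent (↑T : Set (Fin (2 * i + 1) → Bb)) := by
    intro j hj
    exact absurd (gv_self i j) (hj (gv i j) (Finset.mem_coe.mpr (hmemT j)))
  have hone : (⟨1, by omega⟩ : Fin (2 * i + 1)) ≠ 0 := by
    intro h
    simpa using congrArg Fin.val h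
  have h0T : bgust i (gv i 0) = ((false : Bool) : Bb) := bgust_ff i (tupLE_refl _)
  have h1T : bgust i (gv i ⟨1, by omega⟩) = ((true : Bool) : Bb) :=
    bgust_tt i hi hone (tupLE_refl _)
  refine ⟨bgust_mono i hi, ?_, ?_⟩
  · have hset : {c : ℕ∞ | ∃ S : Finset (Fin (2 * i + 1) → Bb),
        ↑S ⊆ traceDom (bgust i) ∧ 2 ≤ S.card ∧
        LinCoherent (↑S : Set (Fin (2 * i + 1) → Bb)) ∧ c = (S.card : ℕ∞)} =
        {((2 * i + 1 : ℕ) : ℕ∞)} := by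
      ext c
      simp only [Set.mem_setOf_eq, Set.mem_singleton_iff]
      constructor
      · rintro ⟨S, hS, h2, hcoh, rfl⟩
        rw [lower i hi S hS h2 hcoh]
      · rintro rfl
        exact ⟨T, hTsub, by omega, hTcoh, by rw [hTcard]⟩
    rw [cc, hset, sInf_singleton]
  · have hset : {c : ℕ∞ | ∃ S : Finset (Fin (2 * i + 1) → Bb),
        ↑S ⊆ traceDom (bgust i) ∧ 3 ≤ S.card ∧
        LinCoherent (↑S : Set (Fin (2 * i + 1) → Bb)) ∧
        (∃ v ∈ S, bgust i v = ((true : Bool) : Bb)) ∧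
        (∃ v ∈ S, bgust i v = ((false : Bool) : Bb)) ∧ c = (S.card : ℕ∞)} =
        {((2 * i + 1 : ℕ) : ℕ∞)} := by
      ext c
      simp only [Set.mem_setOf_eq, Set.mem_singleton_iff]
      constructor
      · rintro ⟨S, hS, h3, hcoh, -, -, rfl⟩
        rw [lower i hi S hS (by omega) hcoh]
      · rintro rfl
        exact ⟨T, hTsub, by omega, hTcoh, ⟨gv i ⟨1, by omega⟩, hmemT _, h1T⟩,
          ⟨gv i 0, hmemT 0, h0T⟩, by rw [hTcard]⟩
    rw [bcc, hset, sInf_singleton]
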